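/- Let c < 0 and θ₀ ∈ ℝ with θ₀ ≠ 0. Then there exists ε₀ > 0 such that for all 0 < ε < ε₀ and all real λ ≥ 0 one has D_ε(λ) ≠ 0, where D_ε(λ) = ε² − (θ₀ + 2i·s₀(λ))·(2(1 + i·s₁(λ)) + cε), with s₀(λ) = √λ and s₁(λ) = √(λ−1) for λ ≥ 1, s₁(λ) = i·√(1−λ) for 0 ≤ λ < 1. (This is the d = 1 statement that the perturbed Hamiltonian has no eigenvalues embedded in [0,∞) or at the threshold.) -/

import Mathlib

open Complex

/-- d = 1: for `c < 0` and `θ₀ ≠ 0`, for small `ε` the resolvent denominator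
`D_ε(λ) = ε² − (θ₀ + 2i·√λ)(2(1 + i·s₁(λ)) + cε)` has no zeros for `λ ≥ 0`,
where `s₁(λ) = √(λ−1)` for `λ ≥ 1` and `s₁(λ) = i√(1−λ)` for `0 ≤ λ < 1`;
i.e. no embedded or threshold eigenvalues. -/
theorem no_embedded_eigenvalues_d1 (c θ₀ : ℝ) (hc : c < 0) (hθ : θ₀ ≠ 0) :
    ∃ ε₀ > (0 : ℝ), ∀ ε : ℝ, 0 < ε → ε < ε₀ → ∀ lam : ℝ, 0 ≤ lam →
      ((ε : ℂ) ^ 2 -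
        ((θ₀ : ℂ) + 2 * Complex.I * (Real.sqrt lam : ℂ)) *
          (2 * (1 + Complex.I *
            (if 1 ≤ lam then ((Real.sqrt (lam - 1) : ℝ) : ℂ)
             else Complex.I * ((Real.sqrt (1 - lam) : ℝ) : ℂ))) + (c : ℂ) * (ε : ℂ)))
      ≠ 0 := by
  refine ⟨min (-2 / c) |θ₀ * c|, lt_min (by rw [div_pos_iff]; right; exact ⟨by norm_num, hc⟩) (abs_pos.mpr (by
    exact mul_ne_zero hθ (ne_of_lt hc))), ?_⟩
  intro ε hε hεlt lam hlam heq
  have hε1 : ε < -2 / c := lt_of_lt_of_le hεlt (min_le_left _ _)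
  have hε2 : ε < |θ₀ * c| := lt_of_lt_of_le hεlt (min_le_right _ _)
  have h2c : 0 < 2 + c * ε := by
    have : c * ε > c * (-2 / c) := by
      exact mul_lt_mul_of_neg_left hε1 hc
    rw [mul_div_cancel₀ _ (ne_of_lt hc)] at this
    linarith
  by_cases hl : 1 ≤ lam
  · rw [if_pos hl] at heq
    set a := Real.sqrt lam with ha
    set b := Real.sqrt (lam - 1) with hb
    have ha1 : 1 ≤ a := by
      rw [ha]; nlinarith [Real.sq_sqrt hlam, Real.sqrt_nonneg lam]
    have hb0 : 0 ≤ b := Real.sqrt_nonneg _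
    have h1 := congrArg Complex.re heq
    have h2 := congrArg Complex.im heq
    simp [Complex.ext_iff, ← Complex.ofReal_pow] at h1 h2
    ring_nf at h1 h2
    nlinarith [mul_pos (lt_of_lt_of_le zero_lt_one ha1) (mul_pos h2c h2c),
      sq_nonneg ε, mul_nonneg (mul_nonneg hb0 (le_of_lt hε)) (le_of_lt hε),
      mul_nonneg (mul_nonneg hb0 hb0) (le_of_lt (lt_of_lt_of_le zero_lt_one ha1))]
  · rw [if_neg hl] at heq
    set a := Real.sqrt lam with ha
    set t := Real.sqrt (1 - lam) with ht
    have ha0 : 0 ≤ a := Real.sqrt_nonneg _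
    have h1 := congrArg Complex.re heq
    have h2 := congrArg Complex.im heq
    simp [Complex.ext_iff, ← Complex.ofReal_pow] at h1 h2
    ring_nf at h1 h2
    rcases h2 with h2 | h2
    · have hlam0 : lam = 0 := le_antisymm (Real.sqrt_eq_zero'.mp h2) hlam
      have ht1 : t = 1 := by rw [ht, hlam0]; simp
      rw [ht1] at h1
      rcases abs_cases (θ₀ * c) with ⟨h, _⟩ | ⟨h, _⟩ <;> nlinarith
    · have h3 : θ₀ * (2 + (ε * c - t * 2)) = 0 := by linear_combination θ₀ * h2
      nlinarith [h3, pow_pos hε 2]
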